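/- Let (Ω, ‖·‖₁) be the Banach space of families U(m,n) of bounded operators on a Banach space X (m ≥ n) with ‖U‖₁ = sup_{m ≥ n} ‖U(m,n)‖ (h_m/h_n)^{-a} μ_{|n|}^{-ε} < ∞. Under hypotheses (a₁), (a₂), (a₄) of the roughness theorem (nonuniform (h,k,μ,ν)-dichotomy for A_m with constants K, a, b, ε; perturbation bound ‖B_m(λ)‖ ≤ c·min{(h_{m+1}/h_m)^a μ_{|m+1|}^{-ω-ε}, ν_{|m+1|}^{-ω-ε}}; series bounds ∑_{τ<m} μ_{|τ+1|}^{-ω} ν_{|m|}^ε ≤ N₁ and ∑_{τ≥m} μ_{|m|}^ε ν_{|τ+1|}^{-ω} ≤ N₂), the operator J defined by (J U)(m,n) = 𝒜(m,n)P_n + ∑_{τ=n}^{m-1} 𝒜(m,τ+1)P_{τ+1}B_τ(λ)U(τ,n) − ∑_{τ=m}^{∞} 𝒜(m,τ+1)Q_{τ+1}B_τ(λ)U(τ,n) maps Ω into Ω and satisfies ‖J U₁ − J U₂‖₁ ≤ K c (N₁+N₂) ‖U₁ − U₂‖₁. In particular, if K c (N₁+N₂) < 1, J has a unique fixed point in Ω.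 -/

import Mathlib

open Filter

/-- A growth rate on `ℤ`. -/
def IsGrowthRate (u : ℤ → ℝ) : Prop :=
  StrictMono u ∧ u 0 = 1 ∧ Tendsto u atTop atTop ∧ Tendsto u atBot (nhds 0)

/-- The weighted quantities whose supremum defines the norm `‖·‖₁`. -/
def weightSet {X : Type*} [NormedAddCommGroup X] [NormedSpace ℝ X]
    (h μ : ℤ → ℝ) (a ε : ℝ) (U : ℤ → ℤ → X →L[ℝ] X) : Set ℝ :=
  (fun p : ℤ × ℤ => ‖U p.1 p.2‖ * (h p.1 / h p.2) ^ (-a) * μ |p.2| ^ (-ε)) '' {p | p.2 ≤ p.1}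

/-- Membership in the Banach space `Ω`: the weighted norm is finite. -/
def InOmega {X : Type*} [NormedAddCommGroup X] [NormedSpace ℝ X]
    (h μ : ℤ → ℝ) (a ε : ℝ) (U : ℤ → ℤ → X →L[ℝ] X) : Prop :=
  BddAbove (weightSet h μ a ε U)

/-- The norm `‖U‖₁ = sup_{m ≥ n} ‖U(m,n)‖ (h m / h n)^{-a} μ_{|n|}^{-ε}`. -/
noncomputable def norm1 {X : Type*} [NormedAddCommGroup X] [NormedSpace ℝ X]
    (h μ : ℤ → ℝ) (a ε : ℝ) (U : ℤ → ℤ → X →L[ℝ] X) : ℝ :=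
  sSup (weightSet h μ a ε U)

/-- The fixed point operator `J`. -/
noncomputable def Jop {X : Type*} [NormedAddCommGroup X] [NormedSpace ℝ X]
    [CompleteSpace X]
    (𝓐 : ℤ → ℤ → X →L[ℝ] X) (P B : ℤ → X →L[ℝ] X)
    (U : ℤ → ℤ → X →L[ℝ] X) (m n : ℤ) : X →L[ℝ] X :=
  (𝓐 m n).comp (P n)
    + ∑ τ ∈ Finset.Ico n m, (𝓐 m (τ + 1)).comp ((P (τ + 1)).comp ((B τ).comp (U τ n)))
    - ∑' τ : ℕ, (𝓐 m (m + τ + 1)).comp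
        (((ContinuousLinearMap.id ℝ X - P (m + τ + 1))).comp
          ((B (m + τ)).comp (U (m + τ) n)))

/-! ### Auxiliary lemmas -/

lemma IsGrowthRate.pos' {u : ℤ → ℝ} (hu : IsGrowthRate u) (n : ℤ) : 0 < u n := by
  have h0 : (0 : ℝ) ≤ u (n - 1) := by
    refine le_of_tendsto hu.2.2.2 ?_
    filter_upwards [eventually_le_atBot (n - 1)] with kk hkk using hu.1.monotone hkk
  linarith [hu.1 (show n - 1 < n by omega)]

lemma IsGrowthRate.one_le_abs' {u : ℤ → ℝ} (hu : IsGrowthRate u) (n : ℤ) : 1 ≤ u |n| := by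
  have := hu.1.monotone (abs_nonneg n)
  rwa [hu.2.1] at this

/-- The positive weight `(h m / h n)^a * μ|n|^ε`. -/
noncomputable def rr (h μ : ℤ → ℝ) (a ε : ℝ) (m n : ℤ) : ℝ :=
  (h m / h n) ^ a * μ |n| ^ ε

lemma rr_pos {h μ : ℤ → ℝ} (hh : IsGrowthRate h) (hμ : IsGrowthRate μ) (a ε : ℝ) (m n : ℤ) :
    0 < rr h μ a ε m n := by
  have h1 := hh.pos' m; have h2 := hh.pos' n; have h3 := hμ.pos' |n|
  exact mul_pos (Real.rpow_pos_of_pos (div_pos h1 h2) a) (Real.rpow_pos_of_pos h3 ε)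

lemma weight_eq {h μ : ℤ → ℝ} (hh : IsGrowthRate h) (hμ : IsGrowthRate μ) (a ε : ℝ)
    (z : ℝ) (m n : ℤ) :
    z * (h m / h n) ^ (-a) * μ |n| ^ (-ε) = z / rr h μ a ε m n := by
  have h1 : (0:ℝ) ≤ h m / h n := (div_pos (hh.pos' m) (hh.pos' n)).le
  have h2 : (0:ℝ) ≤ μ |n| := (hμ.pos' _).le
  simp only [rr]
  rw [Real.rpow_neg h1, Real.rpow_neg h2]
  ring

lemma inOmega_of_bound {X : Type*} [NormedAddCommGroup X] [NormedSpace ℝ X]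
    {h μ : ℤ → ℝ} (hh : IsGrowthRate h) (hμ : IsGrowthRate μ) {a ε : ℝ}
    {U : ℤ → ℤ → X →L[ℝ] X} {C : ℝ}
    (hC : ∀ m n : ℤ, n ≤ m → ‖U m n‖ ≤ C * rr h μ a ε m n) :
    InOmega h μ a ε U := by
  refine ⟨C, ?_⟩
  rintro z ⟨p, hp, rfl⟩
  dsimp only
  rw [weight_eq hh hμ]
  exact (div_le_iff₀ (rr_pos hh hμ a ε p.1 p.2)).mpr (hC p.1 p.2 hp)

lemma bound_of_inOmega {X : Type*} [NormedAddCommGroup X] [NormedSpace ℝ X]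
    {h μ : ℤ → ℝ} (hh : IsGrowthRate h) (hμ : IsGrowthRate μ) {a ε : ℝ}
    {U : ℤ → ℤ → X →L[ℝ] X} (hU : InOmega h μ a ε U) :
    ∃ C : ℝ, 0 ≤ C ∧ ∀ m n : ℤ, n ≤ m → ‖U m n‖ ≤ C * rr h μ a ε m n := by
  obtain ⟨C, hC⟩ := hU
  refine ⟨C, ?_, ?_⟩
  · have h0 : (0:ℝ) ≤ ‖U 0 0‖ * (h 0 / h 0) ^ (-a) * μ |0| ^ (-ε) := by
      rw [weight_eq hh hμ]
      exact div_nonneg (norm_nonneg _) (rr_pos hh hμ a ε 0 0).le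
    exact h0.trans (hC ⟨(0, 0), le_refl (0:ℤ), rfl⟩)
  · intro m n hmn
    have := hC ⟨(m, n), hmn, rfl⟩
    dsimp only at this
    rw [weight_eq hh hμ] at this
    exact (div_le_iff₀ (rr_pos hh hμ a ε m n)).mp this

lemma sum_Ico_shift (g : ℤ → ℝ) (n m : ℤ) :
    ∑ τ ∈ Finset.Ico n m, g (τ + 1) = ∑ j ∈ Finset.range (m - n).toNat, g (m - (j : ℤ)) := by
  refine Finset.sum_nbij' (fun τ => (m - 1 - τ).toNat) (fun j => m - 1 - (j : ℤ)) ?_ ?_ ?_ ?_ ?_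
  · intro τ hτ
    simp only [Finset.mem_Ico] at hτ
    simp only [Finset.mem_range]
    omega
  · intro j hj
    simp only [Finset.mem_range] at hj
    simp only [Finset.mem_Ico]
    omega
  · intro τ hτ
    simp only [Finset.mem_Ico] at hτ
    omega
  · intro j hj
    simp only [Finset.mem_range] at hj
    omega
  · intro τ hτ
    simp only [Finset.mem_Ico] at hτ
    congr 1
    omega

section Key

variable {X : Type*} [NormedAddCommGroup X] [NormedSpace ℝ X] [CompleteSpace X]

/-- The key estimate: the heart of the roughness theorem. -/
lemma key_est
    (𝓐 : ℤ → ℤ → X →L[ℝ] X) (P : ℤ → X →L[ℝ] X)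
    (h k μ ν : ℤ → ℝ) (hh : IsGrowthRate h) (hk : IsGrowthRate k)
    (hμ : IsGrowthRate μ) (hν : IsGrowthRate ν)
    (K a b ε : ℝ) (hK : 0 < K) (ha : a < 0) (hb : 0 ≤ b) (hε : 0 ≤ ε)
    (hbound1 : ∀ m n, n ≤ m → ‖(𝓐 m n).comp (P n)‖ ≤ K * (h m / h n) ^ a * μ |n| ^ ε)
    (hbound2 : ∀ m n, m ≤ n →
      ‖(𝓐 m n).comp (ContinuousLinearMap.id ℝ X - P n)‖ ≤ K * (k n / k m) ^ (-b) * ν |n| ^ ε)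
    (B : ℤ → X →L[ℝ] X) (c ω : ℝ) (hc : 0 < c)
    (hB : ∀ m : ℤ, ‖B m‖ ≤ c * min ((h (m + 1) / h m) ^ a * μ |m + 1| ^ (-(ω + ε)))
      (ν |m + 1| ^ (-(ω + ε))))
    (N₁ N₂ : ℝ)
    (hN₁ : ∀ m : ℤ, Summable (fun τ : ℕ => μ |m - τ| ^ (-ω)) ∧
      (∑' τ : ℕ, μ |m - τ| ^ (-ω)) * ν |m| ^ ε ≤ N₁)
    (hN₂ : ∀ m : ℤ, Summable (fun τ : ℕ => ν |m + τ + 1| ^ (-ω)) ∧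
      μ |m| ^ ε * (∑' τ : ℕ, ν |m + τ + 1| ^ (-ω)) ≤ N₂)
    (U₁ U₂ : ℤ → ℤ → X →L[ℝ] X) (M₁ M₂ M : ℝ)
    (hM₁ : 0 ≤ M₁) (hM₂ : 0 ≤ M₂) (hM : 0 ≤ M)
    (hU₁ : ∀ τ n, n ≤ τ → ‖U₁ τ n‖ ≤ M₁ * rr h μ a ε τ n)
    (hU₂ : ∀ τ n, n ≤ τ → ‖U₂ τ n‖ ≤ M₂ * rr h μ a ε τ n)
    (hΔ : ∀ τ n, n ≤ τ → ‖U₁ τ n - U₂ τ n‖ ≤ M * rr h μ a ε τ n)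
    (m n : ℤ) (hmn : n ≤ m) :
    ‖Jop 𝓐 P B U₁ m n - Jop 𝓐 P B U₂ m n‖
      ≤ K * c * (N₁ + N₂) * M * rr h μ a ε m n := by
  have hrpos : ∀ m' n' : ℤ, 0 < rr h μ a ε m' n' := rr_pos hh hμ a ε
  have hνpos : ∀ x : ℤ, (0:ℝ) < ν x := hν.pos'
  have hμpos : ∀ x : ℤ, (0:ℝ) < μ x := hμ.pos'
  have hhpos : ∀ x : ℤ, (0:ℝ) < h x := hh.pos'
  -- bound on the Q-side summands
  have qb : ∀ (τ : ℕ) (V : X →L[ℝ] X) (C : ℝ), 0 ≤ C →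
      ‖V‖ ≤ C * rr h μ a ε (m + τ) n →
      ‖(𝓐 m (m + (τ:ℤ) + 1)).comp ((ContinuousLinearMap.id ℝ X - P (m + (τ:ℤ) + 1)).comp
          ((B (m + (τ:ℤ))).comp V))‖
        ≤ K * c * C * ν |m + (τ:ℤ) + 1| ^ (-ω) * rr h μ a ε m n := by
    intro τ V C hC hV
    have hτ0 : (0:ℤ) ≤ (τ:ℤ) := Int.natCast_nonneg τ
    have h1 : ‖(𝓐 m (m + (τ:ℤ) + 1)).comp (ContinuousLinearMap.id ℝ X - P (m + (τ:ℤ) + 1))‖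
        ≤ K * (k (m + (τ:ℤ) + 1) / k m) ^ (-b) * ν |m + (τ:ℤ) + 1| ^ ε :=
      hbound2 m (m + (τ:ℤ) + 1) (by omega)
    have h2 : ‖B (m + (τ:ℤ))‖ ≤ c * ν |m + (τ:ℤ) + 1| ^ (-(ω + ε)) :=
      (hB (m + (τ:ℤ))).trans (mul_le_mul_of_nonneg_left (min_le_right _ _) hc.le)
    have hcomp : ‖(𝓐 m (m + (τ:ℤ) + 1)).comp ((ContinuousLinearMap.id ℝ X - P (m + (τ:ℤ) + 1)).comp
          ((B (m + (τ:ℤ))).comp V))‖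
        ≤ ‖(𝓐 m (m + (τ:ℤ) + 1)).comp (ContinuousLinearMap.id ℝ X - P (m + (τ:ℤ) + 1))‖
            * (‖B (m + (τ:ℤ))‖ * ‖V‖) := by
      rw [← ContinuousLinearMap.comp_assoc]
      exact (ContinuousLinearMap.opNorm_comp_le _ _).trans
        (mul_le_mul_of_nonneg_left (ContinuousLinearMap.opNorm_comp_le _ _) (norm_nonneg _))
    have hkr : (k (m + (τ:ℤ) + 1) / k m) ^ (-b) ≤ 1 := by
      refine Real.rpow_le_one_of_one_le_of_nonpos ?_ (by linarith)
      rw [one_le_div (hk.pos' m)]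
      exact hk.1.monotone (by omega)
    have hνε : (0:ℝ) < ν |m + (τ:ℤ) + 1| ^ ε := Real.rpow_pos_of_pos (hνpos _) ε
    have h1' : ‖(𝓐 m (m + (τ:ℤ) + 1)).comp (ContinuousLinearMap.id ℝ X - P (m + (τ:ℤ) + 1))‖
        ≤ K * ν |m + (τ:ℤ) + 1| ^ ε := by
      refine h1.trans ?_
      have : K * (k (m + (τ:ℤ) + 1) / k m) ^ (-b) ≤ K * 1 :=
        mul_le_mul_of_nonneg_left hkr hK.le
      nlinarith
    have hVr : ‖V‖ ≤ C * rr h μ a ε m n := by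
      refine hV.trans (mul_le_mul_of_nonneg_left ?_ hC)
      unfold rr
      refine mul_le_mul_of_nonneg_right ?_ (Real.rpow_pos_of_pos (hμpos _) ε).le
      refine Real.rpow_le_rpow_of_nonpos (div_pos (hhpos m) (hhpos n)) ?_ ha.le
      exact (div_le_div_iff_of_pos_right (hhpos n)).mpr (hh.1.monotone (by omega))
    have hmain : ‖(𝓐 m (m + (τ:ℤ) + 1)).comp (ContinuousLinearMap.id ℝ X - P (m + (τ:ℤ) + 1))‖
            * (‖B (m + (τ:ℤ))‖ * ‖V‖)
        ≤ (K * ν |m + (τ:ℤ) + 1| ^ ε) * ((c * ν |m + (τ:ℤ) + 1| ^ (-(ω + ε)))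
            * (C * rr h μ a ε m n)) := by
      refine mul_le_mul h1' (mul_le_mul h2 hVr (norm_nonneg _)
          (mul_nonneg hc.le (Real.rpow_pos_of_pos (hνpos _) _).le))
        (mul_nonneg (norm_nonneg _) (norm_nonneg _)) (mul_nonneg hK.le hνε.le)
    refine (hcomp.trans hmain).trans_eq ?_
    have e2 : ν |m + (τ:ℤ) + 1| ^ ε * ν |m + (τ:ℤ) + 1| ^ (-(ω + ε))
        = ν |m + (τ:ℤ) + 1| ^ (-ω) := by
      rw [← Real.rpow_add (hνpos _)]; ring_nf
    calc (K * ν |m + (τ:ℤ) + 1| ^ ε) * ((c * ν |m + (τ:ℤ) + 1| ^ (-(ω + ε)))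
            * (C * rr h μ a ε m n))
        = K * c * C * (ν |m + (τ:ℤ) + 1| ^ ε * ν |m + (τ:ℤ) + 1| ^ (-(ω + ε)))
            * rr h μ a ε m n := by ring
      _ = K * c * C * ν |m + (τ:ℤ) + 1| ^ (-ω) * rr h μ a ε m n := by rw [e2]
  -- bound on the P-side summands
  have pb : ∀ τ : ℤ, n ≤ τ → τ < m →
      ‖(𝓐 m (τ + 1)).comp ((P (τ + 1)).comp ((B τ).comp (U₁ τ n - U₂ τ n)))‖
        ≤ K * c * M * μ |τ + 1| ^ (-ω) * rr h μ a ε m n := by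
    intro τ hτ1 hτ2
    have h1 : ‖(𝓐 m (τ + 1)).comp (P (τ + 1))‖
        ≤ K * (h m / h (τ + 1)) ^ a * μ |τ + 1| ^ ε := hbound1 m (τ + 1) (by omega)
    have h2 : ‖B τ‖ ≤ c * ((h (τ + 1) / h τ) ^ a * μ |τ + 1| ^ (-(ω + ε))) :=
      (hB τ).trans (mul_le_mul_of_nonneg_left (min_le_left _ _) hc.le)
    have h3 : ‖U₁ τ n - U₂ τ n‖ ≤ M * ((h τ / h n) ^ a * μ |n| ^ ε) := hΔ τ n hτ1
    have hcomp : ‖(𝓐 m (τ + 1)).comp ((P (τ + 1)).comp ((B τ).comp (U₁ τ n - U₂ τ n)))‖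
        ≤ ‖(𝓐 m (τ + 1)).comp (P (τ + 1))‖ * (‖B τ‖ * ‖U₁ τ n - U₂ τ n‖) := by
      rw [← ContinuousLinearMap.comp_assoc]
      exact (ContinuousLinearMap.opNorm_comp_le _ _).trans
        (mul_le_mul_of_nonneg_left (ContinuousLinearMap.opNorm_comp_le _ _) (norm_nonneg _))
    have hmain : ‖(𝓐 m (τ + 1)).comp (P (τ + 1))‖ * (‖B τ‖ * ‖U₁ τ n - U₂ τ n‖)
        ≤ (K * (h m / h (τ + 1)) ^ a * μ |τ + 1| ^ ε)
            * ((c * ((h (τ + 1) / h τ) ^ a * μ |τ + 1| ^ (-(ω + ε))))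
              * (M * ((h τ / h n) ^ a * μ |n| ^ ε))) := by
      refine mul_le_mul h1 (mul_le_mul h2 h3 (norm_nonneg _)
          (mul_nonneg hc.le (mul_nonneg
            (Real.rpow_pos_of_pos (div_pos (hhpos _) (hhpos _)) _).le
            (Real.rpow_pos_of_pos (hμpos _) _).le)))
        (mul_nonneg (norm_nonneg _) (norm_nonneg _))
        (mul_nonneg (mul_nonneg hK.le
          (Real.rpow_pos_of_pos (div_pos (hhpos _) (hhpos _)) _).le)
          (Real.rpow_pos_of_pos (hμpos _) _).le)
    refine (hcomp.trans hmain).trans_eq ?_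
    have e1 : (h m / h (τ + 1)) ^ a * ((h (τ + 1) / h τ) ^ a * (h τ / h n) ^ a)
        = (h m / h n) ^ a := by
      rw [← Real.mul_rpow (div_pos (hhpos _) (hhpos _)).le (div_pos (hhpos _) (hhpos _)).le,
        ← Real.mul_rpow (div_pos (hhpos _) (hhpos _)).le
          (mul_pos (div_pos (hhpos _) (hhpos _)) (div_pos (hhpos _) (hhpos _))).le]
      congr 1
      have h1' := (hhpos (τ + 1)).ne'
      have h2' := (hhpos τ).ne'
      have h3' := (hhpos n).ne'
      field_simp
    have e2 : μ |τ + 1| ^ ε * μ |τ + 1| ^ (-(ω + ε)) = μ |τ + 1| ^ (-ω) := by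
      rw [← Real.rpow_add (hμpos _)]; ring_nf
    calc (K * (h m / h (τ + 1)) ^ a * μ |τ + 1| ^ ε)
            * ((c * ((h (τ + 1) / h τ) ^ a * μ |τ + 1| ^ (-(ω + ε))))
              * (M * ((h τ / h n) ^ a * μ |n| ^ ε)))
        = K * c * M * (μ |τ + 1| ^ ε * μ |τ + 1| ^ (-(ω + ε)))
            * (((h m / h (τ + 1)) ^ a * ((h (τ + 1) / h τ) ^ a * (h τ / h n) ^ a))
              * μ |n| ^ ε) := by ring
      _ = K * c * M * μ |τ + 1| ^ (-ω) * rr h μ a ε m n := by rw [e1, e2]; rfl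
  -- the three pieces
  set S₁ := ∑ τ ∈ Finset.Ico n m, (𝓐 m (τ + 1)).comp ((P (τ + 1)).comp ((B τ).comp (U₁ τ n)))
    with hS₁
  set S₂ := ∑ τ ∈ Finset.Ico n m, (𝓐 m (τ + 1)).comp ((P (τ + 1)).comp ((B τ).comp (U₂ τ n)))
    with hS₂
  set F₁ : ℕ → X →L[ℝ] X := fun τ => (𝓐 m (m + τ + 1)).comp
      (((ContinuousLinearMap.id ℝ X - P (m + τ + 1))).comp ((B (m + τ)).comp (U₁ (m + τ) n)))
    with hF₁
  set F₂ : ℕ → X →L[ℝ] X := fun τ => (𝓐 m (m + τ + 1)).comp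
      (((ContinuousLinearMap.id ℝ X - P (m + τ + 1))).comp ((B (m + τ)).comp (U₂ (m + τ) n)))
    with hF₂
  have hF₁b : ∀ τ : ℕ, ‖F₁ τ‖ ≤ K * c * M₁ * ν |m + (τ:ℤ) + 1| ^ (-ω) * rr h μ a ε m n :=
    fun τ => qb τ _ M₁ hM₁ (hU₁ (m + τ) n (by omega))
  have hF₂b : ∀ τ : ℕ, ‖F₂ τ‖ ≤ K * c * M₂ * ν |m + (τ:ℤ) + 1| ^ (-ω) * rr h μ a ε m n :=
    fun τ => qb τ _ M₂ hM₂ (hU₂ (m + τ) n (by omega))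
  have hΔFb : ∀ τ : ℕ, ‖F₁ τ - F₂ τ‖ ≤ K * c * M * ν |m + (τ:ℤ) + 1| ^ (-ω) * rr h μ a ε m n := by
    intro τ
    have : F₁ τ - F₂ τ = (𝓐 m (m + τ + 1)).comp
        (((ContinuousLinearMap.id ℝ X - P (m + τ + 1))).comp
          ((B (m + τ)).comp (U₁ (m + τ) n - U₂ (m + τ) n))) := by
      rw [hF₁, hF₂]
      simp only [ContinuousLinearMap.comp_sub]
    rw [this]
    exact qb τ _ M hM (hΔ (m + τ) n (by omega))
  have hsummble : Summable fun τ : ℕ => ν |m + (τ:ℤ) + 1| ^ (-ω) := (hN₂ m).1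
  have hgsum : Summable fun τ : ℕ =>
      K * c * M * ν |m + (τ:ℤ) + 1| ^ (-ω) * rr h μ a ε m n :=
    (hsummble.mul_left (K * c * M)).mul_right _
  have hsumF₁ : Summable F₁ :=
    Summable.of_norm_bounded ((hsummble.mul_left (K * c * M₁)).mul_right _) hF₁b
  have hsumF₂ : Summable F₂ :=
    Summable.of_norm_bounded ((hsummble.mul_left (K * c * M₂)).mul_right _) hF₂b
  -- ν tail sum bound
  have hν2 : (∑' τ : ℕ, ν |m + (τ:ℤ) + 1| ^ (-ω)) ≤ N₂ := by
    have h1 : (1:ℝ) ≤ μ |m| ^ ε := Real.one_le_rpow (hμ.one_le_abs' m) hε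
    have h0 : (0:ℝ) ≤ ∑' τ : ℕ, ν |m + (τ:ℤ) + 1| ^ (-ω) :=
      tsum_nonneg fun τ => (Real.rpow_pos_of_pos (hνpos _) _).le
    calc (∑' τ : ℕ, ν |m + (τ:ℤ) + 1| ^ (-ω))
        ≤ μ |m| ^ ε * (∑' τ : ℕ, ν |m + (τ:ℤ) + 1| ^ (-ω)) := le_mul_of_one_le_left h0 h1
      _ ≤ N₂ := (hN₂ m).2
  -- μ sum bound on Ico
  have hμ1 : (∑ τ ∈ Finset.Ico n m, μ |τ + 1| ^ (-ω)) ≤ N₁ := by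
    have hre : (∑ τ ∈ Finset.Ico n m, μ |τ + 1| ^ (-ω))
        = ∑ j ∈ Finset.range (m - n).toNat, μ |m - (j:ℤ)| ^ (-ω) :=
      sum_Ico_shift (fun x => μ |x| ^ (-ω)) n m
    rw [hre]
    have h1 : (∑ j ∈ Finset.range (m - n).toNat, μ |m - (j:ℤ)| ^ (-ω))
        ≤ ∑' j : ℕ, μ |m - (j:ℤ)| ^ (-ω) :=
      Summable.sum_le_tsum _ (fun j _ => (Real.rpow_pos_of_pos (hμpos _) _).le) (hN₁ m).1
    refine h1.trans ?_
    have hν1 : (1:ℝ) ≤ ν |m| ^ ε := Real.one_le_rpow (hν.one_le_abs' m) hε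
    have h0 : (0:ℝ) ≤ ∑' j : ℕ, μ |m - (j:ℤ)| ^ (-ω) :=
      tsum_nonneg fun j => (Real.rpow_pos_of_pos (hμpos _) _).le
    calc (∑' j : ℕ, μ |m - (j:ℤ)| ^ (-ω))
        ≤ (∑' j : ℕ, μ |m - (j:ℤ)| ^ (-ω)) * ν |m| ^ ε := le_mul_of_one_le_right h0 hν1
      _ ≤ N₁ := (hN₁ m).2
  -- finite sum estimate
  have hS : ‖S₁ - S₂‖ ≤ K * c * M * N₁ * rr h μ a ε m n := by
    rw [hS₁, hS₂, ← Finset.sum_sub_distrib]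
    refine (norm_sum_le _ _).trans ?_
    have hterm : ∀ τ ∈ Finset.Ico n m,
        ‖(𝓐 m (τ + 1)).comp ((P (τ + 1)).comp ((B τ).comp (U₁ τ n)))
          - (𝓐 m (τ + 1)).comp ((P (τ + 1)).comp ((B τ).comp (U₂ τ n)))‖
        ≤ K * c * M * μ |τ + 1| ^ (-ω) * rr h μ a ε m n := by
      intro τ hτ
      simp only [Finset.mem_Ico] at hτ
      have : (𝓐 m (τ + 1)).comp ((P (τ + 1)).comp ((B τ).comp (U₁ τ n)))
          - (𝓐 m (τ + 1)).comp ((P (τ + 1)).comp ((B τ).comp (U₂ τ n)))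
          = (𝓐 m (τ + 1)).comp ((P (τ + 1)).comp ((B τ).comp (U₁ τ n - U₂ τ n))) := by
        simp only [ContinuousLinearMap.comp_sub]
      rw [this]
      exact pb τ hτ.1 hτ.2
    refine (Finset.sum_le_sum hterm).trans ?_
    have he : (∑ τ ∈ Finset.Ico n m, K * c * M * μ |τ + 1| ^ (-ω) * rr h μ a ε m n)
        = K * c * M * (∑ τ ∈ Finset.Ico n m, μ |τ + 1| ^ (-ω)) * rr h μ a ε m n := by
      rw [← Finset.sum_mul, ← Finset.mul_sum]
    rw [he]
    have hKcM : (0:ℝ) ≤ K * c * M := by positivity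
    exact mul_le_mul_of_nonneg_right
      (mul_le_mul_of_nonneg_left hμ1 hKcM) (hrpos m n).le
  -- tsum estimate
  have hsumΔnorm : Summable fun τ : ℕ => ‖F₁ τ - F₂ τ‖ :=
    Summable.of_nonneg_of_le (fun _ => norm_nonneg _) hΔFb hgsum
  have hT : ‖(∑' τ : ℕ, F₁ τ) - ∑' τ : ℕ, F₂ τ‖ ≤ K * c * M * N₂ * rr h μ a ε m n := by
    rw [← Summable.tsum_sub hsumF₁ hsumF₂]
    refine (norm_tsum_le_tsum_norm hsumΔnorm).trans ?_
    refine (Summable.tsum_le_tsum hΔFb hsumΔnorm hgsum).trans ?_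
    have he : (∑' τ : ℕ, K * c * M * ν |m + (τ:ℤ) + 1| ^ (-ω) * rr h μ a ε m n)
        = K * c * M * (∑' τ : ℕ, ν |m + (τ:ℤ) + 1| ^ (-ω)) * rr h μ a ε m n := by
      rw [tsum_mul_right, tsum_mul_left]
    rw [he]
    have hKcM : (0:ℝ) ≤ K * c * M := by positivity
    exact mul_le_mul_of_nonneg_right
      (mul_le_mul_of_nonneg_left hν2 hKcM) (hrpos m n).le
  -- assemble
  have hJ : Jop 𝓐 P B U₁ m n - Jop 𝓐 P B U₂ m n
      = (S₁ - S₂) - ((∑' τ : ℕ, F₁ τ) - ∑' τ : ℕ, F₂ τ) := by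
    simp only [Jop, hS₁, hS₂, hF₁, hF₂]
    abel
  rw [hJ]
  have hr : K * c * (N₁ + N₂) * M * rr h μ a ε m n
      = K * c * M * N₁ * rr h μ a ε m n + K * c * M * N₂ * rr h μ a ε m n := by ring
  have := norm_sub_le (S₁ - S₂) ((∑' τ : ℕ, F₁ τ) - ∑' τ : ℕ, F₂ τ)
  linarith

end Key

section Main

open BoundedContinuousFunction

variable {X : Type*} [NormedAddCommGroup X] [NormedSpace ℝ X] [CompleteSpace X]

/-- Unweighting a bounded function on the region `{n ≤ m}`. -/
noncomputable def unw (h μ : ℤ → ℝ) (a ε : ℝ)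
    (f : {p : ℤ × ℤ // p.2 ≤ p.1} →ᵇ (X →L[ℝ] X)) : ℤ → ℤ → X →L[ℝ] X :=
  fun m n => if hmn : n ≤ m then (rr h μ a ε m n) • f ⟨(m, n), hmn⟩ else 0

lemma unw_norm {h μ : ℤ → ℝ} (hh : IsGrowthRate h) (hμ : IsGrowthRate μ) (a ε : ℝ)
    (f : {p : ℤ × ℤ // p.2 ≤ p.1} →ᵇ (X →L[ℝ] X)) :
    ∀ τ n : ℤ, n ≤ τ → ‖unw h μ a ε f τ n‖ ≤ ‖f‖ * rr h μ a ε τ n := by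
  intro τ n hτ
  have hr := rr_pos hh hμ a ε τ n
  have e : unw h μ a ε f τ n = rr h μ a ε τ n • f ⟨(τ, n), hτ⟩ := dif_pos hτ
  rw [e, norm_smul (rr h μ a ε τ n) (f ⟨(τ, n), hτ⟩), Real.norm_eq_abs, abs_of_pos hr]
  calc rr h μ a ε τ n * ‖f ⟨(τ, n), hτ⟩‖
      ≤ rr h μ a ε τ n * ‖f‖ := mul_le_mul_of_nonneg_left (f.norm_coe_le_norm _) hr.le
    _ = ‖f‖ * rr h μ a ε τ n := mul_comm _ _

lemma unw_sub_norm {h μ : ℤ → ℝ} (hh : IsGrowthRate h) (hμ : IsGrowthRate μ) (a ε : ℝ)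
    (f g : {p : ℤ × ℤ // p.2 ≤ p.1} →ᵇ (X →L[ℝ] X)) :
    ∀ τ n : ℤ, n ≤ τ → ‖unw h μ a ε f τ n - unw h μ a ε g τ n‖
      ≤ dist f g * rr h μ a ε τ n := by
  intro τ n hτ
  have hr := rr_pos hh hμ a ε τ n
  have e1 : unw h μ a ε f τ n = rr h μ a ε τ n • f ⟨(τ, n), hτ⟩ := dif_pos hτ
  have e2 : unw h μ a ε g τ n = rr h μ a ε τ n • g ⟨(τ, n), hτ⟩ := dif_pos hτ
  rw [e1, e2, ← smul_sub,
    norm_smul (rr h μ a ε τ n) (f ⟨(τ, n), hτ⟩ - g ⟨(τ, n), hτ⟩), Real.norm_eq_abs,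
    abs_of_pos hr]
  calc rr h μ a ε τ n * ‖f ⟨(τ, n), hτ⟩ - g ⟨(τ, n), hτ⟩‖
      ≤ rr h μ a ε τ n * dist f g := by
        rw [← dist_eq_norm]
        exact mul_le_mul_of_nonneg_left (dist_coe_le_dist _) hr.le
    _ = dist f g * rr h μ a ε τ n := mul_comm _ _

end Main

open BoundedContinuousFunction

theorem stmt11 {X : Type*} [NormedAddCommGroup X] [NormedSpace ℝ X] [CompleteSpace X]
    (𝓐 : ℤ → ℤ → X →L[ℝ] X)
    (hcoc : ∀ m n k : ℤ, (𝓐 m n).comp (𝓐 n k) = 𝓐 m k)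
    (hid : ∀ n : ℤ, 𝓐 n n = ContinuousLinearMap.id ℝ X)
    (P : ℤ → X →L[ℝ] X)
    (hproj : ∀ n, (P n).comp (P n) = P n)
    (hcomm : ∀ m n, (P m).comp (𝓐 m n) = (𝓐 m n).comp (P n))
    (h k μ ν : ℤ → ℝ) (hh : IsGrowthRate h) (hk : IsGrowthRate k)
    (hμ : IsGrowthRate μ) (hν : IsGrowthRate ν)
    (K a b ε : ℝ) (hK : 0 < K) (ha : a < 0) (hb : 0 ≤ b) (hε : 0 ≤ ε)
    (hbound1 : ∀ m n, n ≤ m → ‖(𝓐 m n).comp (P n)‖ ≤ K * (h m / h n) ^ a * μ |n| ^ ε)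
    (hbound2 : ∀ m n, m ≤ n →
      ‖(𝓐 m n).comp (ContinuousLinearMap.id ℝ X - P n)‖ ≤ K * (k n / k m) ^ (-b) * ν |n| ^ ε)
    (B : ℤ → X →L[ℝ] X) (c ω : ℝ) (hc : 0 < c) (hω : 1 < ω)
    (hB : ∀ m : ℤ, ‖B m‖ ≤ c * min ((h (m + 1) / h m) ^ a * μ |m + 1| ^ (-(ω + ε)))
      (ν |m + 1| ^ (-(ω + ε))))
    (N₁ N₂ : ℝ)
    (hN₁ : ∀ m : ℤ, Summable (fun τ : ℕ => μ |m - τ| ^ (-ω)) ∧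
      (∑' τ : ℕ, μ |m - τ| ^ (-ω)) * ν |m| ^ ε ≤ N₁)
    (hN₂ : ∀ m : ℤ, Summable (fun τ : ℕ => ν |m + τ + 1| ^ (-ω)) ∧
      μ |m| ^ ε * (∑' τ : ℕ, ν |m + τ + 1| ^ (-ω)) ≤ N₂) :
    (∀ U, InOmega h μ a ε U → InOmega h μ a ε (Jop 𝓐 P B U)) ∧
      (∀ U₁ U₂, InOmega h μ a ε U₁ → InOmega h μ a ε U₂ →
        norm1 h μ a ε (fun m n => Jop 𝓐 P B U₁ m n - Jop 𝓐 P B U₂ m n)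
          ≤ K * c * (N₁ + N₂) * norm1 h μ a ε (fun m n => U₁ m n - U₂ m n)) ∧
      (K * c * (N₁ + N₂) < 1 →
        ∃ U, InOmega h μ a ε U ∧ (∀ m n, n ≤ m → Jop 𝓐 P B U m n = U m n) ∧
          ∀ V, InOmega h μ a ε V → (∀ m n, n ≤ m → Jop 𝓐 P B V m n = V m n) →
            ∀ m n, n ≤ m → V m n = U m n) := by
  have hrpos := rr_pos hh hμ a ε
  have key := key_est 𝓐 P h k μ ν hh hk hμ hν K a b ε hK ha hb hε hbound1 hbound2
    B c ω hc hB N₁ N₂ hN₁ hN₂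
  have Jzero : ∀ m n : ℤ, Jop 𝓐 P B (fun _ _ => (0 : X →L[ℝ] X)) m n
      = (𝓐 m n).comp (P n) := by
    intro m n
    simp [Jop]
  have part1bound : ∀ (U : ℤ → ℤ → X →L[ℝ] X) (C : ℝ), 0 ≤ C →
      (∀ τ n, n ≤ τ → ‖U τ n‖ ≤ C * rr h μ a ε τ n) →
      ∀ m n : ℤ, n ≤ m →
        ‖Jop 𝓐 P B U m n‖ ≤ (K + K * c * (N₁ + N₂) * C) * rr h μ a ε m n := by
    intro U C hC hU m n hmn
    have h1 := key U (fun _ _ => 0) C 0 C hC le_rfl hC hU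
      (by intro τ n' hτ; simp) (by intro τ n' hτ; simpa using hU τ n' hτ) m n hmn
    rw [Jzero] at h1
    have h2 := hbound1 m n hmn
    have h2' : ‖(𝓐 m n).comp (P n)‖ ≤ K * rr h μ a ε m n := by
      rw [rr, ← mul_assoc]; exact h2
    have h3 : ‖Jop 𝓐 P B U m n‖
        ≤ ‖Jop 𝓐 P B U m n - (𝓐 m n).comp (P n)‖ + ‖(𝓐 m n).comp (P n)‖ := by
      simpa using norm_add_le (Jop 𝓐 P B U m n - (𝓐 m n).comp (P n)) ((𝓐 m n).comp (P n))
    have h4 : (K + K * c * (N₁ + N₂) * C) * rr h μ a ε m n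
        = K * c * (N₁ + N₂) * C * rr h μ a ε m n + K * rr h μ a ε m n := by ring
    rw [h4]
    linarith
  refine ⟨?_, ?_, ?_⟩
  · -- part 1
    intro U hU
    obtain ⟨C, hC0, hCb⟩ := bound_of_inOmega hh hμ hU
    exact inOmega_of_bound hh hμ (part1bound U C hC0 hCb)
  · -- part 2
    intro U₁ U₂ hU₁Ω hU₂Ω
    obtain ⟨C₁, hC₁0, hC₁⟩ := bound_of_inOmega hh hμ hU₁Ω
    obtain ⟨C₂, hC₂0, hC₂⟩ := bound_of_inOmega hh hμ hU₂Ω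
    have hbddΔ : BddAbove (weightSet h μ a ε (fun m n => U₁ m n - U₂ m n)) := by
      refine inOmega_of_bound hh hμ (C := C₁ + C₂) ?_
      intro m n hmn
      have e : (C₁ + C₂) * rr h μ a ε m n = C₁ * rr h μ a ε m n + C₂ * rr h μ a ε m n := by
        ring
      rw [e]
      exact (norm_sub_le _ _).trans (add_le_add (hC₁ m n hmn) (hC₂ m n hmn))
    simp only [norm1]
    have hub : ∀ τ n : ℤ, n ≤ τ → ‖U₁ τ n - U₂ τ n‖
        ≤ sSup (weightSet h μ a ε (fun m n => U₁ m n - U₂ m n)) * rr h μ a ε τ n := by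
      intro τ n hτ
      have hle := le_csSup hbddΔ (⟨(τ, n), hτ, rfl⟩ :
        ‖U₁ τ n - U₂ τ n‖ * (h τ / h n) ^ (-a) * μ |n| ^ (-ε)
          ∈ weightSet h μ a ε (fun m n => U₁ m n - U₂ m n))
      rw [weight_eq hh hμ] at hle
      exact (div_le_iff₀ (hrpos τ n)).mp hle
    have hM0 : 0 ≤ sSup (weightSet h μ a ε (fun m n => U₁ m n - U₂ m n)) := by
      have hle := le_csSup hbddΔ (⟨((0:ℤ), (0:ℤ)), le_refl (0:ℤ), rfl⟩ :
        ‖U₁ 0 0 - U₂ 0 0‖ * (h 0 / h 0) ^ (-a) * μ |0| ^ (-ε)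
          ∈ weightSet h μ a ε (fun m n => U₁ m n - U₂ m n))
      have h0 : (0:ℝ) ≤ ‖U₁ 0 0 - U₂ 0 0‖ * (h 0 / h 0) ^ (-a) * μ |0| ^ (-ε) := by
        rw [weight_eq hh hμ]
        exact div_nonneg (norm_nonneg _) (hrpos 0 0).le
      linarith
    refine csSup_le ⟨_, ⟨((0:ℤ), (0:ℤ)), le_refl (0:ℤ), rfl⟩⟩ ?_
    rintro z ⟨p, hp, rfl⟩
    dsimp only
    rw [weight_eq hh hμ]
    exact (div_le_iff₀ (hrpos p.1 p.2)).mpr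
      (key U₁ U₂ C₁ C₂ _ hC₁0 hC₂0 hM0 hC₁ hC₂ hub p.1 p.2 hp)
  · -- part 3
    intro hlt
    have hN₁0 : 0 ≤ N₁ := by
      have h2 := (hN₁ 0).2
      have h0 : (0:ℝ) ≤ (∑' τ : ℕ, μ |0 - (τ:ℤ)| ^ (-ω)) * ν |0| ^ ε :=
        mul_nonneg (tsum_nonneg fun τ => (Real.rpow_pos_of_pos (hμ.pos' _) _).le)
          (Real.rpow_pos_of_pos (hν.pos' _) _).le
      linarith
    have hN₂0 : 0 ≤ N₂ := by
      have h2 := (hN₂ 0).2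
      have h0 : (0:ℝ) ≤ μ |0| ^ ε * (∑' τ : ℕ, ν |0 + (τ:ℤ) + 1| ^ (-ω)) :=
        mul_nonneg (Real.rpow_pos_of_pos (hμ.pos' _) _).le
          (tsum_nonneg fun τ => (Real.rpow_pos_of_pos (hν.pos' _) _).le)
      linarith
    have hq0 : (0:ℝ) ≤ K * c * (N₁ + N₂) := by positivity
    haveI : Nonempty ({p : ℤ × ℤ // p.2 ≤ p.1} →ᵇ (X →L[ℝ] X)) := ⟨0⟩
    let Φ : ({p : ℤ × ℤ // p.2 ≤ p.1} →ᵇ (X →L[ℝ] X)) →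
        ({p : ℤ × ℤ // p.2 ≤ p.1} →ᵇ (X →L[ℝ] X)) := fun f =>
      BoundedContinuousFunction.ofNormedAddCommGroup
        (fun p => (rr h μ a ε p.1.1 p.1.2)⁻¹ • Jop 𝓐 P B (unw h μ a ε f) p.1.1 p.1.2)
        continuous_of_discreteTopology (K + K * c * (N₁ + N₂) * ‖f‖)
        (fun p => by
          rw [norm_smul ((rr h μ a ε p.1.1 p.1.2)⁻¹)
              (Jop 𝓐 P B (unw h μ a ε f) p.1.1 p.1.2),
            Real.norm_eq_abs, abs_of_pos (inv_pos.mpr (hrpos _ _)), ← div_eq_inv_mul]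
          exact (div_le_iff₀ (hrpos _ _)).mpr
            (part1bound (unw h μ a ε f) ‖f‖ (norm_nonneg f) (unw_norm hh hμ a ε f)
              p.1.1 p.1.2 p.2))
    have hΦapp : ∀ f p, Φ f p
        = (rr h μ a ε p.1.1 p.1.2)⁻¹ • Jop 𝓐 P B (unw h μ a ε f) p.1.1 p.1.2 :=
      fun f p => rfl
    have hΦlip : ∀ f g, dist (Φ f) (Φ g) ≤ K * c * (N₁ + N₂) * dist f g := by
      intro f g
      refine (BoundedContinuousFunction.dist_le (mul_nonneg hq0 dist_nonneg)).mpr ?_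
      intro p
      have hf0 : (0:ℝ) ≤ ‖f‖ := norm_nonneg f
      have hg0 : (0:ℝ) ≤ ‖g‖ := norm_nonneg g
      rw [dist_eq_norm, hΦapp, hΦapp, ← smul_sub,
        norm_smul ((rr h μ a ε p.1.1 p.1.2)⁻¹)
          (Jop 𝓐 P B (unw h μ a ε f) p.1.1 p.1.2 - Jop 𝓐 P B (unw h μ a ε g) p.1.1 p.1.2),
        Real.norm_eq_abs, abs_of_pos (inv_pos.mpr (hrpos _ _)), ← div_eq_inv_mul]
      refine (div_le_iff₀ (hrpos _ _)).mpr ?_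
      exact key (unw h μ a ε f) (unw h μ a ε g) ‖f‖ ‖g‖ (dist f g) hf0 hg0
        dist_nonneg (unw_norm hh hμ a ε f) (unw_norm hh hμ a ε g)
        (unw_sub_norm hh hμ a ε f g) p.1.1 p.1.2 p.2
    have hcontr : ContractingWith (K * c * (N₁ + N₂)).toNNReal Φ := by
      constructor
      · have h1 : ((K * c * (N₁ + N₂)).toNNReal : ℝ) < ((1 : NNReal) : ℝ) := by
          rw [Real.coe_toNNReal _ hq0]
          simpa using hlt
        exact_mod_cast h1
      · refine LipschitzWith.of_dist_le_mul ?_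
        intro f g
        rw [Real.coe_toNNReal _ hq0]
        exact hΦlip f g
    have hfix : Φ (hcontr.fixedPoint Φ) = hcontr.fixedPoint Φ := hcontr.fixedPoint_isFixedPt
    refine ⟨unw h μ a ε (hcontr.fixedPoint Φ),
      inOmega_of_bound hh hμ (unw_norm hh hμ a ε _), ?_, ?_⟩
    · intro m n hmn
      have h1 : Φ (hcontr.fixedPoint Φ) ⟨(m, n), hmn⟩ = hcontr.fixedPoint Φ ⟨(m, n), hmn⟩ := by
        rw [hfix]
      rw [hΦapp] at h1
      have h2 : unw h μ a ε (hcontr.fixedPoint Φ) m n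
          = rr h μ a ε m n • hcontr.fixedPoint Φ ⟨(m, n), hmn⟩ := dif_pos hmn
      rw [h2, ← h1, smul_smul, mul_inv_cancel₀ (hrpos m n).ne', one_smul]
    · intro V hVΩ hVfix m n hmn
      obtain ⟨C, hC0, hCb⟩ := bound_of_inOmega hh hμ hVΩ
      let g : {p : ℤ × ℤ // p.2 ≤ p.1} →ᵇ (X →L[ℝ] X) :=
        BoundedContinuousFunction.ofNormedAddCommGroup
          (fun p => (rr h μ a ε p.1.1 p.1.2)⁻¹ • V p.1.1 p.1.2)
          continuous_of_discreteTopology C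
          (fun p => by
            rw [norm_smul ((rr h μ a ε p.1.1 p.1.2)⁻¹) (V p.1.1 p.1.2),
              Real.norm_eq_abs, abs_of_pos (inv_pos.mpr (hrpos _ _)), ← div_eq_inv_mul]
            exact (div_le_iff₀ (hrpos _ _)).mpr (hCb p.1.1 p.1.2 p.2))
      have hgapp : ∀ p, g p = (rr h μ a ε p.1.1 p.1.2)⁻¹ • V p.1.1 p.1.2 := fun _ => rfl
      have hunwg : ∀ τ n' : ℤ, n' ≤ τ → unw h μ a ε g τ n' = V τ n' := by
        intro τ n' hτ
        have e : unw h μ a ε g τ n' = rr h μ a ε τ n' • g ⟨(τ, n'), hτ⟩ := dif_pos hτ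
        rw [e, hgapp, smul_smul, mul_inv_cancel₀ (hrpos τ n').ne', one_smul]
      have hgfix : Function.IsFixedPt Φ g := by
        ext p
        obtain ⟨⟨m', n'⟩, hp⟩ := p
        rw [hΦapp]
        have hJ : Jop 𝓐 P B (unw h μ a ε g) m' n' = Jop 𝓐 P B V m' n' := by
          simp only [Jop]
          congr 1
          · congr 1
            exact Finset.sum_congr rfl fun τ hτ => by
              rw [hunwg τ n' (Finset.mem_Ico.mp hτ).1]
          · exact tsum_congr fun τ => by rw [hunwg (m' + τ) n' (by omega)]
        rw [hJ, hVfix m' n' hp, hgapp]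
      have hgeq : g = hcontr.fixedPoint Φ := hcontr.fixedPoint_unique hgfix
      calc V m n = unw h μ a ε g m n := (hunwg m n hmn).symm
        _ = unw h μ a ε (hcontr.fixedPoint Φ) m n := by rw [hgeq]
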